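/- For any MUL-tree T on X for which the folding F(T) is defined, the unfolding U(F(T)) is isomorphic to T as MUL-trees on X. -/

import Mathlib

/-! Basic framework: labelled rooted directed multigraphs, phylogenetic
networks, (pseudo) MUL-trees, unfolding, folding maps, etc. -/

structure Dgr (X : Type) : Type 1 where
  V : Type
  A : Type
  tl : A → V
  hd : A → V
  root : V
  lab : V → Option X

namespace Dgr

variable {X : Type}

/-- There is an arc from `u` to `v`. -/
def arcRel (G : Dgr X) (u v : G.V) : Prop := ∃ a : G.A, G.tl a = u ∧ G.hd a = v

/-- `v` is reachable from `u` by a directed path (possibly trivial);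
equivalently, `v` is below `u` or equal to it. -/
def Reaches (G : Dgr X) : G.V → G.V → Prop := Relation.ReflTransGen G.arcRel

noncomputable def indeg (G : Dgr X) (v : G.V) : ℕ := Nat.card {a : G.A // G.hd a = v}
noncomputable def outdeg (G : Dgr X) (v : G.V) : ℕ := Nat.card {a : G.A // G.tl a = v}

def IsLeaf (G : Dgr X) (v : G.V) : Prop := G.outdeg v = 0

def Acyclic (G : Dgr X) : Prop := ∀ v, ¬ Relation.TransGen G.arcRel v v

/-- A finite rooted DAG: acyclic, the root has in-degree zero and every
vertex is reachable from the root. -/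
def IsRootedDAG (G : Dgr X) : Prop :=
  Finite G.V ∧ Finite G.A ∧ G.Acyclic ∧ G.indeg G.root = 0 ∧ ∀ v, G.Reaches G.root v

/-- A tree vertex: in-degree one, out-degree zero (a leaf) or at least two. -/
def IsTreeVertex (G : Dgr X) (v : G.V) : Prop :=
  G.indeg v = 1 ∧ (G.outdeg v = 0 ∨ 2 ≤ G.outdeg v)

/-- A reticulation vertex: out-degree one and in-degree at least two. -/
def IsRetVertex (G : Dgr X) (v : G.V) : Prop := G.outdeg v = 1 ∧ 2 ≤ G.indeg v

/-- An `X`-network: rooted DAG (multi-arcs allowed), root of out-degree ≥ 2,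
every non-root vertex a tree vertex or a reticulation vertex, and the leaves
are labelled bijectively by `X`. -/
def IsXNetwork (G : Dgr X) : Prop :=
  G.IsRootedDAG ∧ 2 ≤ G.outdeg G.root ∧
  (∀ v, v ≠ G.root → G.IsTreeVertex v ∨ G.IsRetVertex v) ∧
  (∀ v, (∃ x, G.lab v = some x) ↔ G.IsLeaf v) ∧
  (∀ x : X, ∃! v, G.lab v = some x)

def NoMultiArcs (G : Dgr X) : Prop :=
  ∀ a b : G.A, G.tl a = G.tl b → G.hd a = G.hd b → a = b

/-- A phylogenetic network on `X`: an `X`-network without multi-arcs. -/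
def IsPhyloNetwork (G : Dgr X) : Prop := G.IsXNetwork ∧ G.NoMultiArcs

/-- A phylogenetic tree on `X`: a phylogenetic network with no reticulations. -/
def IsPhyloTree (G : Dgr X) : Prop := G.IsPhyloNetwork ∧ ∀ v, ¬ G.IsRetVertex v

/-- A pseudo MUL-tree on `X`: a finite rooted tree whose leaves are labelled
by elements of `X` (several leaves may share a label, every element of `X`
is used, and exactly the leaves are labelled). -/
def IsPMulTree (G : Dgr X) : Prop :=
  G.IsRootedDAG ∧ (∀ v, v ≠ G.root → G.indeg v = 1) ∧
  (∀ v, (∃ x, G.lab v = some x) ↔ G.IsLeaf v) ∧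
  (∀ x : X, ∃ v, G.lab v = some x)

/-- A MUL-tree: a pseudo MUL-tree with no in-degree-one out-degree-one vertex. -/
def IsMulTree (G : Dgr X) : Prop :=
  G.IsPMulTree ∧ ∀ v, ¬ (G.indeg v = 1 ∧ G.outdeg v = 1)

/-- Isomorphism of labelled rooted directed multigraphs. -/
def Iso (G H : Dgr X) : Prop :=
  ∃ (φ : G.V ≃ H.V) (ψ : G.A ≃ H.A),
    (∀ a, H.tl (ψ a) = φ (G.tl a)) ∧ (∀ a, H.hd (ψ a) = φ (G.hd a)) ∧
    φ G.root = H.root ∧ (∀ v, H.lab (φ v) = G.lab v)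

/-- The pendant subgraph rooted at `v` (everything below or equal to `v`). -/
def pendant (G : Dgr X) (v : G.V) : Dgr X where
  V := {w : G.V // G.Reaches v w}
  A := {a : G.A // G.Reaches v (G.tl a)}
  tl a := ⟨G.tl a.1, a.2⟩
  hd a := ⟨G.hd a.1, a.2.tail ⟨a.1, rfl, rfl⟩⟩
  root := ⟨v, Relation.ReflTransGen.refl⟩
  lab w := G.lab w.1

/-- Directed paths in `G` starting at the root, ending at the index vertex. -/
inductive RPath (G : Dgr X) : G.V → Type
  | nil : RPath G G.root
  | cons {v : G.V} (p : RPath G v) (a : G.A) (h : G.tl a = v) : RPath G (G.hd a)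

/-- The path-tree `U*(G)`: vertices are directed root-paths of `G`, arcs are
one-arc extensions, the label of a path is the label of its last vertex. -/
def Ustar (G : Dgr X) : Dgr X where
  V := Σ v : G.V, RPath G v
  A := Σ v : G.V, RPath G v × {a : G.A // G.tl a = v}
  tl x := ⟨x.1, x.2.1⟩
  hd x := ⟨G.hd x.2.2.1, RPath.cons x.2.1 x.2.2.1 x.2.2.2⟩
  root := ⟨G.root, RPath.nil⟩
  lab x := G.lab x.1

/-- Vertices kept by the suppression operation (the root is always kept). -/
def Keep (G : Dgr X) (v : G.V) : Prop :=
  v = G.root ∨ ¬ (G.indeg v = 1 ∧ G.outdeg v = 1)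

def startV (G : Dgr X) (l : List G.A) : G.V :=
  match l.head? with
  | some a => G.tl a
  | none => G.root

def endV (G : Dgr X) (l : List G.A) : G.V :=
  match l.getLast? with
  | some a => G.hd a
  | none => G.root

/-- `l` is a composable sequence of arcs. -/
def IsChain (G : Dgr X) (l : List G.A) : Prop :=
  ∀ p a b s, l = p ++ a :: b :: s → G.hd a = G.tl b

/-- An arc of the suppression: a nonempty directed path between kept vertices
all of whose intermediate vertices are suppressed. -/
def IsSuppArc (G : Dgr X) (l : List G.A) : Prop :=
  l ≠ [] ∧ G.IsChain l ∧ G.Keep (G.startV l) ∧ G.Keep (G.endV l) ∧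
  ∀ p a s, l = p ++ a :: s → s ≠ [] → ¬ G.Keep (G.hd a)

/-- Suppression of all in-degree-one out-degree-one vertices. -/
def suppress (G : Dgr X) : Dgr X where
  V := {v : G.V // G.Keep v}
  A := {l : List G.A // G.IsSuppArc l}
  tl l := ⟨G.startV l.1, l.2.2.2.1⟩
  hd l := ⟨G.endV l.1, l.2.2.2.2.1⟩
  root := ⟨G.root, Or.inl rfl⟩
  lab v := G.lab v.1

/-- The unfolding `U(G)`: the path-tree with in-degree-one out-degree-one
vertices suppressed. -/
def U (G : Dgr X) : Dgr X := G.Ustar.suppress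

/-- An `X`-morphism: maps on vertices and arcs commuting with heads and tails
and preserving the leaf-labelling by `X`. -/
structure Mor (G H : Dgr X) where
  fV : G.V → H.V
  fA : G.A → H.A
  tl_comm : ∀ a, H.tl (fA a) = fV (G.tl a)
  hd_comm : ∀ a, H.hd (fA a) = fV (G.hd a)
  lab_pres : ∀ v x, G.lab v = some x → H.lab (fV v) = some x

def Mor.IsRooted {G H : Dgr X} (f : Mor G H) : Prop := f.fV G.root = H.root

/-- A folding map: a surjective `X`-morphism with the unique arc-lifting
property. -/
def Mor.IsFolding {G H : Dgr X} (f : Mor G H) : Prop :=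
  Function.Surjective f.fV ∧ Function.Surjective f.fA ∧
  ∀ (a : H.A) (v : G.V), f.fV v = H.tl a →
    ∃! b : G.A, G.tl b = v ∧ f.fA b = a

/-- The canonical map `U*(G) → G` sending a root-path to its last vertex. -/
def fstar (G : Dgr X) : Mor G.Ustar G where
  fV x := x.1
  fA x := x.2.2.1
  tl_comm a := a.2.2.2
  hd_comm _ := rfl
  lab_pres _ _ h := h

/-- `v` is an interior vertex of the arc-sequence `l`. -/
def IsInteriorOf (G : Dgr X) (l : List G.A) (v : G.V) : Prop :=
  ∃ p a s, l = p ++ a :: s ∧ s ≠ [] ∧ G.hd a = v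

/-- `G'` is a subdivision of `G`. -/
def IsSubdivisionOf (G' G : Dgr X) : Prop :=
  ∃ (φ : G.V → G'.V) (ψ : G.A → List G'.A),
    Function.Injective φ ∧ φ G.root = G'.root ∧
    (∀ v, G'.lab (φ v) = G.lab v) ∧
    (∀ a, ψ a ≠ [] ∧ G'.IsChain (ψ a) ∧ G'.startV (ψ a) = φ (G.tl a) ∧
      G'.endV (ψ a) = φ (G.hd a) ∧
      ∀ v, G'.IsInteriorOf (ψ a) v → v ∉ Set.range φ) ∧
    (∀ v' : G'.V, v' ∉ Set.range φ →
      G'.indeg v' = 1 ∧ G'.outdeg v' = 1 ∧ G'.lab v' = none) ∧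
    (∀ a' : G'.A, ∃! a : G.A, a' ∈ ψ a)

/-- `H` is (isomorphic to) a subgraph of `G`. -/
def IsSubgraphOf (H G : Dgr X) : Prop :=
  ∃ (φ : H.V → G.V) (ψ : H.A → G.A),
    Function.Injective φ ∧ Function.Injective ψ ∧
    (∀ a, G.tl (ψ a) = φ (H.tl a)) ∧ (∀ a, G.hd (ψ a) = φ (H.hd a)) ∧
    (∀ v, H.lab v = G.lab (φ v))

/-- `G` displays `T`: some subgraph of `G` is a subdivision of `T`. -/
def Displays (G T : Dgr X) : Prop :=
  ∃ H : Dgr X, IsSubgraphOf H G ∧ IsSubdivisionOf H T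

/-- `T` is weakly displayed by `G`: `T` is displayed by the unfolding `U(G)`. -/
def WeaklyDisplays (G T : Dgr X) : Prop := Displays G.U T

/-- `N` is (isomorphic to) the folding `F(T)` of the MUL-tree `T`: `N` is an
`X`-network obtained as the quotient of a subdivision `T'` of `T` by the
relation identifying vertices with isomorphic pendant subtrees, the quotient
map being a folding map whose fibres are exactly the classes of that relation. -/
def IsFoldingOf (N T : Dgr X) : Prop :=
  N.IsXNetwork ∧ ∃ T' : Dgr X, IsSubdivisionOf T' T ∧
    ∃ f : Mor T' N, f.IsFolding ∧
      ∀ u v : T'.V, f.fV u = f.fV v ↔ Iso (T'.pendant u) (T'.pendant v)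

/-- `N` is stable: `F(U(N))` is isomorphic to `N`. -/
def Stable (N : Dgr X) : Prop :=
  ∃ N' : Dgr X, IsFoldingOf N' N.U ∧ Iso N' N

/-- `T'` is the guide tree `T†` of the folding operation applied to `T`:
a subdivision of `T` whose quotient by the isomorphic-pendant-subtree
relation is an `X`-network via a folding map. -/
def IsDaggerOf (T' T : Dgr X) : Prop :=
  IsSubdivisionOf T' T ∧ ∃ (N : Dgr X) (f : Mor T' N), N.IsXNetwork ∧
    f.IsFolding ∧
    ∀ u v : T'.V, f.fV u = f.fV v ↔ Iso (T'.pendant u) (T'.pendant v)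

/-- The child of every reticulation vertex is a tree vertex. -/
def Compressed (N : Dgr X) : Prop :=
  ∀ a : N.A, N.IsRetVertex (N.tl a) → N.IsTreeVertex (N.hd a)

/-- Every (non-leaf) tree vertex has out-degree two. -/
def SemiResolved (N : Dgr X) : Prop :=
  ∀ v, N.indeg v = 1 → N.outdeg v = 0 ∨ N.outdeg v = 2

/-- Binary phylogenetic network. -/
def BinaryNet (N : Dgr X) : Prop :=
  N.outdeg N.root = 2 ∧ ∀ v, v ≠ N.root →
    (N.IsRetVertex v → N.indeg v = 2) ∧
    (N.indeg v = 1 → N.outdeg v = 0 ∨ N.outdeg v = 2)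

/-- Binary tree: every vertex has out-degree zero or two. -/
def BinaryTree (T : Dgr X) : Prop := ∀ v, T.outdeg v = 0 ∨ T.outdeg v = 2

/-- The set of children of a vertex. -/
def children (N : Dgr X) (v : N.V) : Set N.V := {w | ∃ a, N.tl a = v ∧ N.hd a = w}

/-- Tree-sibling network: every reticulation vertex has a sibling that is a
tree vertex. -/
def TreeSibling (N : Dgr X) : Prop :=
  ∀ v, N.IsRetVertex v → ∃ w, w ≠ v ∧ N.IsTreeVertex w ∧
    ∃ a b : N.A, N.tl a = N.tl b ∧ N.hd a = v ∧ N.hd b = w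

/-- The final vertex in `N` of (the path underlying) a vertex of `U(N)`. -/
def endOf (N : Dgr X) (p : N.U.V) : N.V := p.1.1

/-- Identifiable pair of tree vertices. -/
def Identifiable (N : Dgr X) (v w : N.V) : Prop :=
  v ≠ w ∧ N.IsTreeVertex v ∧ N.IsTreeVertex w ∧
  ∃ p q : N.U.V, N.endOf p = v ∧ N.endOf q = w ∧
    Iso (N.U.pendant p) (N.U.pendant q)

/-- Irreducible network: no identifiable pair of tree vertices. -/
def Irreducible (N : Dgr X) : Prop := ¬ ∃ v w, N.Identifiable v w

/-- The pendant subtree at `v` is inextendible: some other vertex carries an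
isomorphic pendant subtree. -/
def Inextendible (T : Dgr X) (v : T.V) : Prop :=
  ∃ v', v' ≠ v ∧ Iso (T.pendant v) (T.pendant v')

/-- A reconciliation map between a tree `T` and a network `N`. -/
structure Recon (T N : Dgr X) where
  r : T.V → N.V
  P : T.A → List N.A
  tree_or_root : ∀ v, r v = N.root ∨ N.IsTreeVertex (r v)
  leaf_fix : ∀ v x, T.lab v = some x → N.lab (r v) = some x
  chain : ∀ a, N.IsChain (P a)
  trivialP : ∀ a, P a = [] → r (T.tl a) = r (T.hd a)
  startP : ∀ a, P a ≠ [] → N.startV (P a) = r (T.tl a)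
  endP : ∀ a, P a ≠ [] → N.endV (P a) = r (T.hd a)

/-- Locally separated reconciliation: for any two distinct arcs of `T` with
the same tail, both associated paths are nonempty and have distinct initial
arcs. -/
def Recon.LocSep {T N : Dgr X} (ρ : Recon T N) : Prop :=
  ∀ a b : T.A, a ≠ b → T.tl a = T.tl b →
    ρ.P a ≠ [] ∧ ρ.P b ≠ [] ∧ (ρ.P a).head? ≠ (ρ.P b).head?

/-- The pendant subnetwork `N(u)`: restrict below `u` and suppress. -/
def Nsub (N : Dgr X) (u : N.V) : Dgr X := (N.pendant u).suppress

/-- The function `τ` of the dynamic program (as a proposition, `τ(v,u)=1`). -/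
def tau (T N : Dgr X) (v : T.V) (u : N.V) : Prop :=
  (T.IsLeaf v → ∀ x, T.lab v = some x →
     ∃ u' : N.V, N.lab u' = some x ∧ N.Reaches u u') ∧
  (¬ T.IsLeaf v → ∃ u' : N.V, (u' = N.root ∨ N.IsTreeVertex u') ∧
     N.Reaches u u' ∧ ∃ ρ : Recon (T.pendant v) (N.Nsub u'), ρ.LocSep)

/-- The result of `HangLeaves(v)` on the network `N` (new leaves are labelled
by the two new elements of `X ⊕ Fin 2`); vertices `inr 0, 1, 2, 3, 4` are
`x_v, x'_v, p_v, q_v, ρ_v` respectively. -/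
def HangN (N : Dgr X) (v : N.V) : Dgr (X ⊕ Fin 2) where
  V := N.V ⊕ Fin 5
  A := N.A ⊕ Fin 6
  tl := Sum.elim (fun a => Sum.inl (N.tl a))
    ![Sum.inr 4, Sum.inr 4, Sum.inr 2, Sum.inl v, Sum.inr 2, Sum.inr 3]
  hd := Sum.elim (fun a => Sum.inl (N.hd a))
    ![Sum.inl N.root, Sum.inr 2, Sum.inr 3, Sum.inr 3, Sum.inr 1, Sum.inr 0]
  root := Sum.inr 4
  lab := Sum.elim (fun w => (N.lab w).map Sum.inl)
    ![some (Sum.inr 0), some (Sum.inr 1), none, none, none]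

/-- The result of `HangLeaves` on the tree `T`; vertices `inr 0, 1, 2, 3` are
`x_v, x'_v, p_v, ρ_v` respectively. -/
def HangT (T : Dgr X) : Dgr (X ⊕ Fin 2) where
  V := T.V ⊕ Fin 4
  A := T.A ⊕ Fin 4
  tl := Sum.elim (fun a => Sum.inl (T.tl a))
    ![Sum.inr 3, Sum.inr 3, Sum.inr 2, Sum.inr 2]
  hd := Sum.elim (fun a => Sum.inl (T.hd a))
    ![Sum.inl T.root, Sum.inr 2, Sum.inr 0, Sum.inr 1]
  root := Sum.inr 3
  lab := Sum.elim (fun w => (T.lab w).map Sum.inl)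
    ![some (Sum.inr 0), some (Sum.inr 1), none, none]

end Dgr
namespace Dgr

variable {X : Type}

theorem iso_symm {G H : Dgr X} (h : Iso G H) : Iso H G := by
  obtain ⟨φ, ψ, htl, hhd, hr, hlab⟩ := h
  refine ⟨φ.symm, ψ.symm, ?_, ?_, ?_, ?_⟩
  · intro a
    have := htl (ψ.symm a); rw [Equiv.apply_symm_apply] at this
    rw [this, Equiv.symm_apply_apply]
  · intro a
    have := hhd (ψ.symm a); rw [Equiv.apply_symm_apply] at this
    rw [this, Equiv.symm_apply_apply]
  · rw [← hr, Equiv.symm_apply_apply]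
  · intro v
    have := hlab (φ.symm v); rw [Equiv.apply_symm_apply] at this
    rw [this]

theorem iso_trans {G H K : Dgr X} (h1 : Iso G H) (h2 : Iso H K) : Iso G K := by
  obtain ⟨φ1, ψ1, htl1, hhd1, hr1, hlab1⟩ := h1
  obtain ⟨φ2, ψ2, htl2, hhd2, hr2, hlab2⟩ := h2
  refine ⟨φ1.trans φ2, ψ1.trans ψ2, ?_, ?_, ?_, ?_⟩
  · intro a; simp [htl2, htl1]
  · intro a; simp [hhd2, hhd1]
  · simp [hr1, hr2]
  · intro v; simp [hlab2, hlab1]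

/-! ### Path machinery -/

def pcast {G : Dgr X} : ∀ {u v : G.V}, u = v → G.RPath u → G.RPath v
  | _, _, rfl, p => p

theorem sig_pcast {G : Dgr X} {u v : G.V} (h : u = v) (p : G.RPath u) :
    (⟨v, pcast h p⟩ : Σ w, G.RPath w) = ⟨u, p⟩ := by subst h; rfl

def lastArcS {G : Dgr X} : (Σ v, G.RPath v) → Option G.A
  | ⟨_, .nil⟩ => none
  | ⟨_, .cons _ a _⟩ => some a

def prevS {G : Dgr X} : (Σ v, G.RPath v) → Option (Σ v, G.RPath v)
  | ⟨_, .nil⟩ => none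
  | ⟨_, .cons p _ _⟩ => some ⟨_, p⟩

theorem cons_congr {G : Dgr X} {u₁ u₂ : G.V} {p₁ : G.RPath u₁} {p₂ : G.RPath u₂}
    (hp : (⟨u₁, p₁⟩ : Σ v, G.RPath v) = ⟨u₂, p₂⟩) {c₁ c₂ : G.A} (hc : c₁ = c₂)
    (h₁ : G.tl c₁ = u₁) (h₂ : G.tl c₂ = u₂) :
    (⟨G.hd c₁, .cons p₁ c₁ h₁⟩ : Σ v, G.RPath v) = ⟨G.hd c₂, .cons p₂ c₂ h₂⟩ := by
  subst hc
  have hu : u₁ = u₂ := congrArg Sigma.fst hp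
  subst hu
  have : p₁ = p₂ := by simpa using hp
  subst this
  rfl

theorem path_unique {G : Dgr X} (h0 : ∀ a : G.A, G.hd a ≠ G.root)
    (h1 : ∀ a b : G.A, G.hd a = G.hd b → a = b) :
    ∀ {v : G.V} (p : G.RPath v) {w : G.V} (q : G.RPath w), v = w →
      (⟨v, p⟩ : Σ v, G.RPath v) = ⟨w, q⟩ := by
  intro v p
  induction p with
  | nil =>
    intro w q hw
    cases q with
    | nil => rfl
    | cons q' b hb => exact absurd hw.symm (h0 b)
  | cons p' a ha ih =>
    intro w q hw
    cases q with
    | nil => exact absurd hw (h0 a)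
    | cons q' b hb =>
      obtain rfl : a = b := h1 a b hw
      exact cons_congr (ih q' (ha.symm.trans hb)) rfl ha hb

theorem path_exists {G : Dgr X} {v : G.V} (h : G.Reaches G.root v) :
    Nonempty (G.RPath v) := by
  induction h with
  | refl => exact ⟨.nil⟩
  | tail hr harc ih =>
    obtain ⟨a, ha1, ha2⟩ := harc
    obtain ⟨p⟩ := ih
    exact ⟨pcast ha2 (.cons p a ha1)⟩

/-! ### Mapping paths along a folding morphism -/

def mapP {G H : Dgr X} (f : Mor G H) (hr : f.fV G.root = H.root) :
    ∀ {v : G.V}, G.RPath v → H.RPath (f.fV v)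
  | _, .nil => pcast hr.symm .nil
  | _, .cons p a h =>
      pcast (f.hd_comm a) (.cons (mapP f hr p) (f.fA a) (by rw [f.tl_comm, h]))

def Fmap {G H : Dgr X} (f : Mor G H) (hr : f.fV G.root = H.root) :
    (Σ v, G.RPath v) → Σ u, H.RPath u := fun x => ⟨f.fV x.1, mapP f hr x.2⟩

theorem F_nil {G H : Dgr X} (f : Mor G H) (hr : f.fV G.root = H.root) :
    Fmap f hr ⟨G.root, .nil⟩ = ⟨H.root, .nil⟩ := sig_pcast hr.symm .nil

theorem F_cons {G H : Dgr X} (f : Mor G H) (hr : f.fV G.root = H.root)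
    {v : G.V} (p : G.RPath v) (a : G.A) (h : G.tl a = v) :
    Fmap f hr ⟨G.hd a, .cons p a h⟩
      = ⟨H.hd (f.fA a), .cons (mapP f hr p) (f.fA a) (by rw [f.tl_comm, h])⟩ :=
  sig_pcast (f.hd_comm a) _

theorem F_inj {G H : Dgr X} (f : Mor G H) (hr : f.fV G.root = H.root)
    (hlift : ∀ (c : H.A) (v : G.V), f.fV v = H.tl c → ∃! b : G.A, G.tl b = v ∧ f.fA b = c) :
    ∀ {v : G.V} (p : G.RPath v) {w : G.V} (q : G.RPath w),
      Fmap f hr ⟨v, p⟩ = Fmap f hr ⟨w, q⟩ → (⟨v, p⟩ : Σ v, G.RPath v) = ⟨w, q⟩ := by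
  intro v p
  induction p with
  | nil =>
    intro w q h
    cases q with
    | nil => rfl
    | cons q' b hb =>
      have h2 := congrArg lastArcS h
      rw [F_nil, F_cons] at h2
      simp [lastArcS] at h2
  | cons p' a ha ih =>
    intro w q h
    cases q with
    | nil =>
      have h2 := congrArg lastArcS h
      rw [F_nil, F_cons] at h2
      simp [lastArcS] at h2
    | cons q' b hb =>
      have hlast := congrArg lastArcS h
      rw [F_cons, F_cons] at hlast
      simp only [lastArcS, Option.some.injEq] at hlast
      have hprev := congrArg prevS h
      rw [F_cons, F_cons] at hprev
      simp only [prevS, Option.some.injEq] at hprev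
      have hpq := ih q' hprev
      have hv := congrArg Sigma.fst hpq
      obtain rfl : a = b := by
        obtain ⟨b₀, -, hub⟩ := hlift (f.fA a) _ (by rw [f.tl_comm, ha])
        exact (hub a ⟨ha, rfl⟩).trans (hub b ⟨hb.trans hv.symm, hlast.symm⟩).symm
      exact cons_congr hpq rfl ha hb

theorem F_surj {G H : Dgr X} (f : Mor G H) (hr : f.fV G.root = H.root)
    (hlift : ∀ (c : H.A) (v : G.V), f.fV v = H.tl c → ∃! b : G.A, G.tl b = v ∧ f.fA b = c) :
    ∀ {u : H.V} (q : H.RPath u), ∃ x : Σ v, G.RPath v, Fmap f hr x = ⟨u, q⟩ := by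
  intro u q
  induction q with
  | nil => exact ⟨⟨G.root, .nil⟩, F_nil f hr⟩
  | cons q' c hc ih =>
    obtain ⟨⟨v, p⟩, hx⟩ := ih
    have hv : f.fV v = _ := congrArg Sigma.fst hx
    obtain ⟨b, ⟨hb1, hb2⟩, -⟩ := hlift c v (hv.trans hc.symm)
    refine ⟨⟨G.hd b, .cons p b hb1⟩, ?_⟩
    rw [F_cons]
    exact cons_congr hx hb2 _ hc

end Dgr
namespace Dgr

variable {X : Type}

theorem chain_cons {G : Dgr X} {c : G.A} {l : List G.A} (h : G.IsChain (c :: l)) :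
    G.IsChain l := fun p a b s hl => h (c :: p) a b s (by rw [hl]; rfl)

theorem startV_cons {G : Dgr X} (c : G.A) (l : List G.A) :
    G.startV (c :: l) = G.tl c := rfl

theorem endV_cons {G : Dgr X} (c : G.A) {l : List G.A} (h : l ≠ []) :
    G.endV (c :: l) = G.endV l := by
  cases l with
  | nil => exact absurd rfl h
  | cons d t => simp [endV, List.getLast?_cons_cons]

theorem endV_concat {G : Dgr X} (l : List G.A) (a : G.A) :
    G.endV (l ++ [a]) = G.hd a := by simp [endV, List.getLast?_concat]

theorem startV_eq_of_head {G : Dgr X} {l : List G.A} {a : G.A}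
    (h : l.head? = some a) : G.startV l = G.tl a := by
  cases l with
  | nil => simp at h
  | cons c t => simp at h; subst h; rfl

theorem endV_eq_of_getLast {G : Dgr X} {l : List G.A} {a : G.A}
    (h : l.getLast? = some a) : G.endV l = G.hd a := by
  simp [endV, h]

theorem chain_reach {G : Dgr X} :
    ∀ (l : List G.A), G.IsChain l → ∀ a' ∈ l, G.Reaches (G.startV l) (G.hd a') := by
  intro l
  induction l with
  | nil => intro _ a' h; simp at h
  | cons c t ih =>
    intro hch a' h
    rcases List.mem_cons.mp h with rfl | h'
    · exact Relation.ReflTransGen.single ⟨a', rfl, rfl⟩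
    · cases t with
      | nil => simp at h'
      | cons d t' =>
        have h1 : G.hd c = G.tl d := hch [] c d t' rfl
        have h2 := ih (chain_cons hch) a' h'
        rw [startV_cons] at h2 ⊢
        rw [← h1] at h2
        exact Relation.ReflTransGen.head ⟨c, rfl, rfl⟩ h2

theorem chain_reach_end {G : Dgr X} {l : List G.A} (hch : G.IsChain l) (h : l ≠ []) :
    G.Reaches (G.startV l) (G.endV l) := by
  rw [endV_eq_of_getLast (List.getLast?_eq_getLast h)]
  exact chain_reach l hch _ (List.getLast_mem h)

/-! ### Suppression respects isomorphism -/

theorem map_decomp {α β : Type} (e : α ≃ β) {l : List α} {p : List β} {x : β} {s : List β}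
    (h : l.map e = p ++ x :: s) :
    l = p.map e.symm ++ e.symm x :: s.map e.symm := by
  have h2 := congrArg (List.map e.symm) h
  simpa [List.map_map] using h2

section Transfer

variable {G H : Dgr X} (φ : G.V ≃ H.V) (ψ : G.A ≃ H.A)

theorem startV_map (htl : ∀ a, H.tl (ψ a) = φ (G.tl a)) (hr : φ G.root = H.root)
    (l : List G.A) : H.startV (l.map ψ) = φ (G.startV l) := by
  cases l with
  | nil => exact hr.symm
  | cons c t => rw [List.map_cons, startV_cons, startV_cons, htl]

theorem endV_map (hhd : ∀ a, H.hd (ψ a) = φ (G.hd a)) (hr : φ G.root = H.root)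
    (l : List G.A) : H.endV (l.map ψ) = φ (G.endV l) := by
  induction l using List.reverseRecOn with
  | nil => exact hr.symm
  | append_singleton t a _ => rw [List.map_append, List.map_cons, List.map_nil,
      endV_concat, endV_concat, hhd]

theorem chain_map (htl : ∀ a, H.tl (ψ a) = φ (G.tl a)) (hhd : ∀ a, H.hd (ψ a) = φ (G.hd a))
    {l : List G.A} (hl : G.IsChain l) : H.IsChain (l.map ψ) := by
  intro p a b s hdec
  have h2 := map_decomp ψ hdec
  rw [show (b :: s).map ψ.symm = ψ.symm b :: s.map ψ.symm from rfl] at h2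
  have h3 := hl _ _ _ _ h2
  have h4 := hhd (ψ.symm a)
  have h5 := htl (ψ.symm b)
  rw [Equiv.apply_symm_apply] at h4 h5
  rw [h4, h5, h3]

theorem keep_map (htl : ∀ a, H.tl (ψ a) = φ (G.tl a)) (hhd : ∀ a, H.hd (ψ a) = φ (G.hd a))
    (hr : φ G.root = H.root) (v : G.V) : G.Keep v ↔ H.Keep (φ v) := by
  have hdeg1 : H.indeg (φ v) = G.indeg v :=
    (Nat.card_congr (ψ.subtypeEquiv (fun a => by
      rw [hhd a]; exact ⟨fun hh => by rw [hh], fun hh => φ.injective hh⟩))).symm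
  have hdeg2 : H.outdeg (φ v) = G.outdeg v :=
    (Nat.card_congr (ψ.subtypeEquiv (fun a => by
      rw [htl a]; exact ⟨fun hh => by rw [hh], fun hh => φ.injective hh⟩))).symm
  unfold Keep
  rw [hdeg1, hdeg2]
  constructor
  · rintro (rfl | hnd)
    · exact Or.inl hr
    · exact Or.inr hnd
  · rintro (hrt | hnd)
    · exact Or.inl (φ.injective (hrt.trans hr.symm))
    · exact Or.inr hnd

theorem suppArc_map (htl : ∀ a, H.tl (ψ a) = φ (G.tl a)) (hhd : ∀ a, H.hd (ψ a) = φ (G.hd a))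
    (hr : φ G.root = H.root) {l : List G.A} (h : G.IsSuppArc l) :
    H.IsSuppArc (l.map ψ) := by
  obtain ⟨hne, hch, hks, hke, hint⟩ := h
  refine ⟨by simpa using hne, chain_map φ ψ htl hhd hch, ?_, ?_, ?_⟩
  · rw [startV_map φ ψ htl hr]; exact (keep_map φ ψ htl hhd hr _).mp hks
  · rw [endV_map φ ψ hhd hr]; exact (keep_map φ ψ htl hhd hr _).mp hke
  · intro p a s hdec hs
    have h2 := map_decomp ψ hdec
    have h3 := hint _ _ _ h2 (by simpa using hs)
    have h4 := hhd (ψ.symm a)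
    rw [Equiv.apply_symm_apply] at h4
    rw [h4]
    exact fun hk => h3 ((keep_map φ ψ htl hhd hr _).mpr hk)

end Transfer

def listEquiv {α β : Type} (e : α ≃ β) : List α ≃ List β where
  toFun := List.map e
  invFun := List.map e.symm
  left_inv l := by simp [List.map_map]
  right_inv l := by simp [List.map_map]

theorem iso_suppress {G H : Dgr X} (h : Iso G H) : Iso G.suppress H.suppress := by
  obtain ⟨φ, ψ, htl, hhd, hr, hlab⟩ := h
  have htl' : ∀ a, G.tl (ψ.symm a) = φ.symm (H.tl a) := by
    intro a
    have := htl (ψ.symm a); rw [Equiv.apply_symm_apply] at this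
    rw [this, Equiv.symm_apply_apply]
  have hhd' : ∀ a, G.hd (ψ.symm a) = φ.symm (H.hd a) := by
    intro a
    have := hhd (ψ.symm a); rw [Equiv.apply_symm_apply] at this
    rw [this, Equiv.symm_apply_apply]
  have hr' : φ.symm H.root = G.root := by rw [← hr, Equiv.symm_apply_apply]
  have hiff : ∀ l : List G.A, G.IsSuppArc l ↔ H.IsSuppArc (l.map ψ) := by
    intro l
    constructor
    · exact suppArc_map φ ψ htl hhd hr
    · intro hl
      have := suppArc_map φ.symm ψ.symm htl' hhd' hr' hl
      simpa [List.map_map] using this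
  refine ⟨φ.subtypeEquiv (fun v => keep_map φ ψ htl hhd hr v),
    (listEquiv ψ).subtypeEquiv hiff, ?_, ?_, ?_, ?_⟩
  · intro a
    exact Subtype.ext (startV_map φ ψ htl hr a.1)
  · intro a
    exact Subtype.ext (endV_map φ ψ hhd hr a.1)
  · exact Subtype.ext hr
  · intro v
    exact hlab v.1

end Dgr
namespace Dgr

variable {X : Type}

structure SubdivData (T' T : Dgr X) where
  φ : T.V → T'.V
  ψ : T.A → List T'.A
  inj : Function.Injective φ
  root : φ T.root = T'.root
  lab : ∀ v, T'.lab (φ v) = T.lab v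
  ne : ∀ a, ψ a ≠ []
  chain : ∀ a, T'.IsChain (ψ a)
  start : ∀ a, T'.startV (ψ a) = φ (T.tl a)
  endv : ∀ a, T'.endV (ψ a) = φ (T.hd a)
  inter : ∀ a v, T'.IsInteriorOf (ψ a) v → v ∉ Set.range φ
  non : ∀ v', v' ∉ Set.range φ → T'.indeg v' = 1 ∧ T'.outdeg v' = 1 ∧ T'.lab v' = none
  cov : ∀ a', ∃! a, a' ∈ ψ a

theorem subdivData_of (T' T : Dgr X) (h : IsSubdivisionOf T' T) :
    Nonempty (SubdivData T' T) := by
  obtain ⟨φ, ψ, h1, h2, h3, h4, h5, h6⟩ := h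
  exact ⟨⟨φ, ψ, h1, h2, h3, fun a => (h4 a).1, fun a => (h4 a).2.1, fun a => (h4 a).2.2.1,
    fun a => (h4 a).2.2.2.1, fun a => (h4 a).2.2.2.2, h5, h6⟩⟩

variable {T' T : Dgr X} (D : SubdivData T' T)

theorem mem_tail {a : T.A} {a' : T'.A} (h : a' ∈ D.ψ a) :
    (T'.tl a' = D.φ (T.tl a) ∧ (D.ψ a).head? = some a') ∨ T'.tl a' ∉ Set.range D.φ := by
  obtain ⟨p, s, hdec⟩ := List.append_of_mem h
  rcases List.eq_nil_or_concat p with rfl | ⟨p₀, b, rfl⟩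
  · left
    have hst := D.start a
    rw [hdec] at hst
    simp only [List.nil_append] at hst
    rw [startV_cons] at hst
    exact ⟨hst, by rw [hdec]; simp⟩
  · right
    have hb : T'.hd b = T'.tl a' := D.chain a p₀ b a' s (by rw [hdec]; simp)
    rw [← hb]
    exact D.inter a _ ⟨p₀, b, a' :: s, by rw [hdec]; simp, by simp, rfl⟩

theorem mem_head {a : T.A} {a' : T'.A} (h : a' ∈ D.ψ a) :
    (T'.hd a' = D.φ (T.hd a) ∧ (D.ψ a).getLast? = some a') ∨ T'.hd a' ∉ Set.range D.φ := by
  obtain ⟨p, s, hdec⟩ := List.append_of_mem h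
  cases s with
  | nil =>
    left
    have hend := D.endv a
    rw [hdec, endV_concat] at hend
    exact ⟨hend, by rw [hdec]; exact List.getLast?_concat⟩
  | cons e s' =>
    right
    exact D.inter a _ ⟨p, a', e :: s', hdec, by simp, rfl⟩

noncomputable def inArcEquiv (v : T.V) :
    {a : T.A // T.hd a = v} ≃ {a' : T'.A // T'.hd a' = D.φ v} := by
  refine Equiv.ofBijective
    (fun y => ⟨(D.ψ y.1).getLast (D.ne y.1), ?_⟩) ⟨?_, ?_⟩
  · rw [← endV_eq_of_getLast (List.getLast?_eq_getLast (D.ne y.1)), D.endv, y.2]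
  · intro y₁ y₂ hy
    have hy' : (D.ψ y₁.1).getLast (D.ne y₁.1) = (D.ψ y₂.1).getLast (D.ne y₂.1) :=
      congrArg Subtype.val hy
    have m1 : (D.ψ y₁.1).getLast (D.ne y₁.1) ∈ D.ψ y₁.1 := List.getLast_mem _
    have m2 : (D.ψ y₁.1).getLast (D.ne y₁.1) ∈ D.ψ y₂.1 := by rw [hy']; exact List.getLast_mem _
    obtain ⟨a₀, -, hu⟩ := D.cov ((D.ψ y₁.1).getLast (D.ne y₁.1))
    exact Subtype.ext ((hu y₁.1 m1).trans (hu y₂.1 m2).symm)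
  · rintro ⟨x, hx⟩
    obtain ⟨a, ha, -⟩ := D.cov x
    rcases mem_head D ha with ⟨h1, h2⟩ | h1
    · have hav : T.hd a = v := D.inj (h1.symm.trans hx)
      refine ⟨⟨a, hav⟩, Subtype.ext ?_⟩
      have := List.getLast?_eq_getLast (D.ne a)
      rw [h2] at this
      exact (Option.some.inj this).symm
    · exact absurd ⟨v, hx.symm⟩ h1

noncomputable def outArcEquiv (v : T.V) :
    {a : T.A // T.tl a = v} ≃ {a' : T'.A // T'.tl a' = D.φ v} := by
  refine Equiv.ofBijective
    (fun y => ⟨(D.ψ y.1).head (D.ne y.1), ?_⟩) ⟨?_, ?_⟩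
  · rw [← startV_eq_of_head (List.head?_eq_head (D.ne y.1)), D.start, y.2]
  · intro y₁ y₂ hy
    have hy' : (D.ψ y₁.1).head (D.ne y₁.1) = (D.ψ y₂.1).head (D.ne y₂.1) :=
      congrArg Subtype.val hy
    have m1 : (D.ψ y₁.1).head (D.ne y₁.1) ∈ D.ψ y₁.1 := List.head_mem _
    have m2 : (D.ψ y₁.1).head (D.ne y₁.1) ∈ D.ψ y₂.1 := by rw [hy']; exact List.head_mem _
    obtain ⟨a₀, -, hu⟩ := D.cov ((D.ψ y₁.1).head (D.ne y₁.1))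
    exact Subtype.ext ((hu y₁.1 m1).trans (hu y₂.1 m2).symm)
  · rintro ⟨x, hx⟩
    obtain ⟨a, ha, -⟩ := D.cov x
    rcases mem_tail D ha with ⟨h1, h2⟩ | h1
    · have hav : T.tl a = v := D.inj (h1.symm.trans hx)
      refine ⟨⟨a, hav⟩, Subtype.ext ?_⟩
      have := List.head?_eq_head (D.ne a)
      rw [h2] at this
      exact (Option.some.inj this).symm
    · exact absurd ⟨v, hx.symm⟩ h1

theorem indeg_phi (v : T.V) : T'.indeg (D.φ v) = T.indeg v :=
  (Nat.card_congr (inArcEquiv D v)).symm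

theorem outdeg_phi (v : T.V) : T'.outdeg (D.φ v) = T.outdeg v :=
  (Nat.card_congr (outArcEquiv D v)).symm

theorem keep_iff (hnd : ∀ v, ¬ (T.indeg v = 1 ∧ T.outdeg v = 1)) (w : T'.V) :
    T'.Keep w ↔ w ∈ Set.range D.φ := by
  constructor
  · rintro (rfl | hnd')
    · exact ⟨T.root, D.root⟩
    · by_contra hw
      exact hnd' ⟨(D.non w hw).1, (D.non w hw).2.1⟩
  · rintro ⟨v, rfl⟩
    right
    rw [indeg_phi D, outdeg_phi D]
    exact hnd v

theorem sync {G : Dgr X}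
    (hout : ∀ w, ¬ G.Keep w → ∀ d e : G.A, G.tl d = w → G.tl e = w → d = e) :
    ∀ (l m : List G.A), l ≠ [] → m ≠ [] → l.head? = m.head? →
      G.IsChain l → G.IsChain m →
      (∀ p a s, l = p ++ a :: s → s ≠ [] → ¬ G.Keep (G.hd a)) →
      (∀ p a s, m = p ++ a :: s → s ≠ [] → ¬ G.Keep (G.hd a)) →
      G.Keep (G.endV l) → G.Keep (G.endV m) → l = m := by
  intro l
  induction l with
  | nil => intro m h; exact absurd rfl h
  | cons c l' ih =>
    intro m _ hm hhead hcl hcm hil him hkl hkm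
    cases m with
    | nil => exact absurd rfl hm
    | cons c' m' =>
      obtain rfl : c = c' := by simpa using hhead
      cases hl' : l' with
      | nil =>
        subst hl'
        cases m' with
        | nil => rfl
        | cons e m'' =>
          exact absurd hkl (him [] c (e :: m'') rfl (by simp))
      | cons d l'' =>
        subst hl'
        have hnotk : ¬ G.Keep (G.hd c) := hil [] c (d :: l'') rfl (by simp)
        cases m' with
        | nil => exact absurd hkm hnotk
        | cons e m'' =>
          have h1 : G.hd c = G.tl d := hcl [] c d l'' rfl
          have h2 : G.hd c = G.tl e := hcm [] c e m'' rfl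
          obtain rfl : d = e := hout _ hnotk d e h1.symm h2.symm
          have heq := ih (d :: m'') (by simp) (by simp) rfl
            (chain_cons hcl) (chain_cons hcm)
            (fun p a s hdec hs => hil (c :: p) a s (by rw [hdec]; rfl) hs)
            (fun p a s hdec hs => him (c :: p) a s (by rw [hdec]; rfl) hs)
            (by rwa [endV_cons c (by simp)] at hkl)
            (by rwa [endV_cons c (by simp)] at hkm)
          rw [heq]

theorem suppArc_iff (hnd : ∀ v, ¬ (T.indeg v = 1 ∧ T.outdeg v = 1)) (l : List T'.A) :
    T'.IsSuppArc l ↔ ∃ a, l = D.ψ a := by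
  have hkeep := keep_iff D hnd
  have hout : ∀ w, ¬ T'.Keep w → ∀ d e : T'.A, T'.tl d = w → T'.tl e = w → d = e := by
    intro w hw d e hd he
    have h1 : T'.outdeg w = 1 := (D.non w (fun hr => hw ((hkeep w).mpr hr))).2.1
    have := (Nat.card_eq_one_iff_unique.mp h1).1
    exact congrArg Subtype.val (@Subsingleton.elim _ this ⟨d, hd⟩ ⟨e, he⟩)
  constructor
  · rintro ⟨hne, hch, hks, hke, hint⟩
    cases l with
    | nil => exact absurd rfl hne
    | cons c t =>
      obtain ⟨a, ha, -⟩ := D.cov c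
      rcases mem_tail D ha with ⟨-, h2⟩ | h1
      · refine ⟨a, sync hout (c :: t) (D.ψ a) (by simp) (D.ne a) (by rw [h2]; rfl)
          hch (D.chain a) hint ?_ hke ?_⟩
        · intro p b s hdec hs hk
          exact D.inter a _ ⟨p, b, s, hdec, hs, rfl⟩ ((hkeep _).mp hk)
        · rw [D.endv a]
          exact (hkeep _).mpr ⟨_, rfl⟩
      · rw [startV_cons] at hks
        exact absurd ((hkeep _).mp hks) h1
  · rintro ⟨a, rfl⟩
    refine ⟨D.ne a, D.chain a, ?_, ?_, ?_⟩
    · rw [D.start a]; exact (hkeep _).mpr ⟨_, rfl⟩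
    · rw [D.endv a]; exact (hkeep _).mpr ⟨_, rfl⟩
    · intro p b s hdec hs hk
      exact D.inter a _ ⟨p, b, s, hdec, hs, rfl⟩ ((hkeep _).mp hk)

theorem reach_phi {u v : T.V} (h : T.Reaches u v) :
    T'.Reaches (D.φ u) (D.φ v) := by
  induction h with
  | refl => exact Relation.ReflTransGen.refl
  | tail hr harc ih =>
    obtain ⟨a, ha1, ha2⟩ := harc
    have h2 := chain_reach_end (D.chain a) (D.ne a)
    rw [D.start a, D.endv a, ha1, ha2] at h2
    exact ih.trans h2

include D in
theorem reach_all (hreach : ∀ v, T.Reaches T.root v) (w : T'.V) :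
    T'.Reaches T'.root w := by
  rcases Classical.em (w ∈ Set.range D.φ) with hw | hw
  · obtain ⟨v, rfl⟩ := hw
    rw [← D.root]
    exact reach_phi D (hreach v)
  · have h1 : T'.indeg w = 1 := (D.non w hw).1
    obtain ⟨⟨a', ha'⟩⟩ := (Nat.card_eq_one_iff_unique.mp h1).2
    obtain ⟨a, ha, -⟩ := D.cov a'
    have h2 := chain_reach (D.ψ a) (D.chain a) a' ha
    rw [D.start a] at h2
    rw [← ha', ← D.root]
    exact (reach_phi D (hreach (T.tl a))).trans h2

end Dgr
namespace Dgr

variable {X : Type}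

theorem mk2_congr {H : Dgr X} {x y : Σ u, H.RPath u} (h : x = y) {c₁ c₂ : H.A}
    (hc : c₁ = c₂) (h₁ : H.tl c₁ = x.1) (h₂ : H.tl c₂ = y.1) :
    (⟨x.1, x.2, c₁, h₁⟩ : H.Ustar.A) = ⟨y.1, y.2, c₂, h₂⟩ := by
  subst h; subst hc; rfl

def arcPath {H : Dgr X} : H.Ustar.A → Σ u, H.RPath u := fun x => ⟨x.1, x.2.1⟩

def arcArc {H : Dgr X} : H.Ustar.A → H.A := fun x => x.2.2.1

theorem tree_fold_ustar {G H : Dgr X} (f : Mor G H) (hr : f.fV G.root = H.root)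
    (hlift : ∀ (c : H.A) (v : G.V), f.fV v = H.tl c → ∃! b : G.A, G.tl b = v ∧ f.fA b = c)
    (h0 : ∀ a : G.A, G.hd a ≠ G.root) (h1 : ∀ a b : G.A, G.hd a = G.hd b → a = b)
    (hreach : ∀ v, G.Reaches G.root v) (hlab : ∀ v, H.lab (f.fV v) = G.lab v) :
    Iso G H.Ustar := by
  have hE : Function.Bijective (Sigma.fst : (Σ v, G.RPath v) → G.V) := by
    constructor
    · intro x y h
      obtain ⟨v, p⟩ := x; obtain ⟨w, q⟩ := y
      exact path_unique h0 h1 p q h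
    · intro v
      exact ⟨⟨v, (path_exists (hreach v)).some⟩, rfl⟩
  set eE := Equiv.ofBijective (Sigma.fst : (Σ v, G.RPath v) → G.V) hE with heE
  set e₁ := eE.symm with he₁
  have hfst : ∀ v, (e₁ v).1 = v := fun v => eE.apply_symm_apply v
  have Finj : Function.Injective (Fmap f hr) := by
    intro x y h
    obtain ⟨v, p⟩ := x; obtain ⟨w, q⟩ := y
    exact F_inj f hr hlift p q h
  have Fsurj : Function.Surjective (Fmap f hr) := by
    rintro ⟨u, q⟩
    exact F_surj f hr hlift q
  set eF := Equiv.ofBijective (Fmap f hr) ⟨Finj, Fsurj⟩ with heF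
  have hGAinj : Function.Injective (fun a : G.A =>
      (⟨(Fmap f hr (e₁ (G.tl a))).1, (Fmap f hr (e₁ (G.tl a))).2, f.fA a,
        (f.tl_comm a).trans (congrArg f.fV (hfst (G.tl a)).symm)⟩ : H.Ustar.A)) := by
    intro a₁ a₂ h
    have hp : Fmap f hr (e₁ (G.tl a₁)) = Fmap f hr (e₁ (G.tl a₂)) := congrArg arcPath h
    have htl : G.tl a₁ = G.tl a₂ := e₁.injective (Finj hp)
    have ha : f.fA a₁ = f.fA a₂ := congrArg arcArc h
    obtain ⟨b₀, -, hu⟩ := hlift (f.fA a₁) (G.tl a₁) (f.tl_comm a₁).symm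
    exact (hu a₁ ⟨rfl, rfl⟩).trans (hu a₂ ⟨htl.symm, ha.symm⟩).symm
  have hGAsurj : Function.Surjective (fun a : G.A =>
      (⟨(Fmap f hr (e₁ (G.tl a))).1, (Fmap f hr (e₁ (G.tl a))).2, f.fA a,
        (f.tl_comm a).trans (congrArg f.fV (hfst (G.tl a)).symm)⟩ : H.Ustar.A)) := by
    rintro ⟨u, q, c, hc⟩
    obtain ⟨⟨v, p⟩, hx⟩ := F_surj f hr hlift q
    have hv : f.fV v = u := congrArg Sigma.fst hx
    obtain ⟨b, ⟨hb1, hb2⟩, -⟩ := hlift c v (hv.trans hc.symm)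
    refine ⟨b, ?_⟩
    have h5 : e₁ (G.tl b) = ⟨v, p⟩ := by
      rw [hb1]
      exact path_unique h0 h1 (e₁ v).2 p (hfst v)
    exact mk2_congr (x := Fmap f hr (e₁ (G.tl b))) (y := ⟨u, q⟩)
      (by rw [h5]; exact hx) hb2 _ hc
  refine ⟨e₁.trans eF, Equiv.ofBijective _ ⟨hGAinj, hGAsurj⟩, ?_, ?_, ?_, ?_⟩
  · intro a; rfl
  · intro a
    show _ = Fmap f hr (e₁ (G.hd a))
    have h5 : e₁ (G.hd a) = ⟨G.hd a, .cons (e₁ (G.tl a)).2 a (hfst (G.tl a)).symm⟩ :=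
      path_unique h0 h1 (e₁ (G.hd a)).2 _ (hfst (G.hd a))
    rw [h5, F_cons]
    rfl
  · show Fmap f hr (e₁ G.root) = _
    have h5 : e₁ G.root = ⟨G.root, .nil⟩ :=
      path_unique h0 h1 (e₁ G.root).2 .nil (hfst G.root)
    rw [h5, F_nil]
    rfl
  · intro v
    show H.lab (f.fV (e₁ v).1) = G.lab v
    rw [hfst v]
    exact hlab v

variable {T' T : Dgr X} (D : SubdivData T' T)

include D in
theorem subdiv_suppress_iso (hnd : ∀ v, ¬ (T.indeg v = 1 ∧ T.outdeg v = 1)) :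
    Iso T T'.suppress := by
  have hkeep := keep_iff D hnd
  have hvinj : Function.Injective (fun v : T.V =>
      (⟨D.φ v, (hkeep _).mpr ⟨v, rfl⟩⟩ : {w // T'.Keep w})) := by
    intro v₁ v₂ h
    exact D.inj (congrArg Subtype.val h)
  have hvsurj : Function.Surjective (fun v : T.V =>
      (⟨D.φ v, (hkeep _).mpr ⟨v, rfl⟩⟩ : {w // T'.Keep w})) := by
    rintro ⟨w, hk⟩
    obtain ⟨v, rfl⟩ := (hkeep w).mp hk
    exact ⟨v, rfl⟩
  have hainj : Function.Injective (fun a : T.A =>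
      (⟨D.ψ a, (suppArc_iff D hnd _).mpr ⟨a, rfl⟩⟩ : {l // T'.IsSuppArc l})) := by
    intro a₁ a₂ h
    have h' : D.ψ a₁ = D.ψ a₂ := congrArg Subtype.val h
    have m1 : (D.ψ a₁).head (D.ne a₁) ∈ D.ψ a₁ := List.head_mem _
    have m2 : (D.ψ a₁).head (D.ne a₁) ∈ D.ψ a₂ := by rw [← h']; exact m1
    obtain ⟨a₀, -, hu⟩ := D.cov ((D.ψ a₁).head (D.ne a₁))
    exact (hu a₁ m1).trans (hu a₂ m2).symm
  have hasurj : Function.Surjective (fun a : T.A =>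
      (⟨D.ψ a, (suppArc_iff D hnd _).mpr ⟨a, rfl⟩⟩ : {l // T'.IsSuppArc l})) := by
    rintro ⟨l, hs⟩
    obtain ⟨a, rfl⟩ := (suppArc_iff D hnd l).mp hs
    exact ⟨a, rfl⟩
  refine ⟨Equiv.ofBijective _ ⟨hvinj, hvsurj⟩, Equiv.ofBijective _ ⟨hainj, hasurj⟩,
    ?_, ?_, ?_, ?_⟩
  · intro a
    exact Subtype.ext (D.start a)
  · intro a
    exact Subtype.ext (D.endv a)
  · exact Subtype.ext D.root
  · intro v
    exact D.lab v

end Dgr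
/-- For any MUL-tree `T` on `X` for which the folding `F(T)`
is defined, the unfolding `U(F(T))` is isomorphic to `T` as MUL-trees on `X`. -/
theorem unfold_fold (X : Type) (T N : Dgr X) (hT : T.IsMulTree)
    (hF : Dgr.IsFoldingOf N T) : Dgr.Iso N.U T := by
  classical
  obtain ⟨hN, T', hsub, f, hf, -⟩ := hF
  obtain ⟨D⟩ := Dgr.subdivData_of T' T hsub
  obtain ⟨⟨⟨hTfinV, hTfinA, hTacyc, hTroot0, hTreach⟩, hTin, hTlabiff, hTlabex⟩, hnd⟩ := hT
  obtain ⟨⟨hNfinV, hNfinA, hNacyc, hNroot0, hNreach⟩, hNout2, hNtr, hNlabiff, hNlabex⟩ := hN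
  obtain ⟨hfVsurj, hfAsurj, hlift⟩ := hf
  haveI := hTfinA
  haveI := hNfinA
  -- no arc of T' ends at the root
  have inEmpty : IsEmpty {a : T.A // T.hd a = T.root} := by
    rcases Nat.card_eq_zero.mp hTroot0 with h | h
    · exact h
    · exact absurd (Subtype.finite) h.not_finite
  have h0' : ∀ a' : T'.A, T'.hd a' ≠ T'.root := by
    intro a' h
    exact inEmpty.elim ((Dgr.inArcEquiv D T.root).symm ⟨a', h.trans D.root.symm⟩)
  -- arcs of T' with equal heads are equal
  have hsub1 : ∀ w : T'.V, T'.indeg w = 1 →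
      ∀ a' b' : T'.A, T'.hd a' = w → T'.hd b' = w → a' = b' := by
    intro w hw a' b' ha hb
    haveI := (Nat.card_eq_one_iff_unique.mp hw).1
    exact congrArg Subtype.val
      (Subsingleton.elim (⟨a', ha⟩ : {x : T'.A // T'.hd x = w}) ⟨b', hb⟩)
  have h1' : ∀ a' b' : T'.A, T'.hd a' = T'.hd b' → a' = b' := by
    intro a' b' h
    rcases Classical.em (T'.hd a' ∈ Set.range D.φ) with ⟨v, hv⟩ | hnr
    · have hvr : v ≠ T.root := by
        rintro rfl
        exact h0' a' (hv.symm.trans D.root)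
      have hone : T'.indeg (D.φ v) = 1 := by
        rw [Dgr.indeg_phi D]; exact hTin v hvr
      exact hsub1 _ hone a' b' hv.symm (h.symm.trans hv.symm)
    · exact hsub1 _ (D.non _ hnr).1 a' b' rfl h.symm
  have hreach' := Dgr.reach_all D hTreach
  -- the folding map is rooted
  have hfroot : f.fV T'.root = N.root := by
    obtain ⟨v, hv⟩ := hfVsurj N.root
    rcases Classical.em (v = T'.root) with rfl | hne
    · exact hv
    · exfalso
      have hex : ∃ a', T'.hd a' = v := by
        rcases Classical.em (v ∈ Set.range D.φ) with ⟨u, rfl⟩ | hnr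
        · have hur : u ≠ T.root := fun hh => hne (by rw [hh]; exact D.root)
          have h1 : T'.indeg (D.φ u) = 1 := by rw [Dgr.indeg_phi D]; exact hTin u hur
          obtain ⟨⟨a', ha'⟩⟩ := (Nat.card_eq_one_iff_unique.mp h1).2
          exact ⟨a', ha'⟩
        · obtain ⟨⟨a', ha'⟩⟩ := (Nat.card_eq_one_iff_unique.mp (D.non v hnr).1).2
          exact ⟨a', ha'⟩
      obtain ⟨a', ha'⟩ := hex
      have hroot : N.hd (f.fA a') = N.root := by rw [f.hd_comm, ha', hv]
      have h2 : Nat.card {c : N.A // N.hd c = N.root} ≠ 0 :=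
        Nat.card_ne_zero.mpr ⟨⟨⟨f.fA a', hroot⟩⟩, Subtype.finite⟩
      exact h2 hNroot0
  -- the folding map preserves labels on the nose
  have hlabf : ∀ v, N.lab (f.fV v) = T'.lab v := by
    intro v
    rcases hl : T'.lab v with _ | x
    · have hex : ∃ a', T'.tl a' = v := by
        rcases Classical.em (v ∈ Set.range D.φ) with ⟨u, rfl⟩ | hnr
        · have hlu : T.lab u = none := by rw [← D.lab]; exact hl
          have hnl : ¬ T.IsLeaf u := fun hleaf => by
            obtain ⟨x, hx⟩ := (hTlabiff u).mpr hleaf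
            rw [hlu] at hx
            cases hx
          have h2 : T.outdeg u ≠ 0 := hnl
          obtain ⟨⟨⟨a, ha⟩⟩, -⟩ := Nat.card_ne_zero.mp h2
          exact ⟨(Dgr.outArcEquiv D u ⟨a, ha⟩).1, (Dgr.outArcEquiv D u ⟨a, ha⟩).2⟩
        · obtain ⟨⟨a', ha'⟩⟩ := (Nat.card_eq_one_iff_unique.mp (D.non v hnr).2.1).2
          exact ⟨a', ha'⟩
      obtain ⟨a', ha'⟩ := hex
      have h3 : N.outdeg (f.fV v) ≠ 0 :=
        Nat.card_ne_zero.mpr ⟨⟨⟨f.fA a', by rw [f.tl_comm, ha']⟩⟩, Subtype.finite⟩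
      rcases hq : N.lab (f.fV v) with _ | x
      · rfl
      · exact absurd ((hNlabiff (f.fV v)).mp ⟨x, hq⟩) h3
    · exact f.lab_pres v x hl
  have isoT'U : Dgr.Iso T' N.Ustar :=
    Dgr.tree_fold_ustar f hfroot hlift h0' h1' hreach' hlabf
  have isoTsup : Dgr.Iso T T'.suppress := Dgr.subdiv_suppress_iso D hnd
  exact Dgr.iso_trans (Dgr.iso_suppress (Dgr.iso_symm isoT'U)) (Dgr.iso_symm isoTsup)
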